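/- arXiv:2501.12938 — 2 statements merged into one kernel-verified Lean document; each statement's English description precedes it below -/
import Mathlib

section
/- (Remark 1 equality.) For any λ ∈ (0, D(P₀‖P₁)) and any ε ∈ (0,1), the minimum over ρ ∈ [0,1] and q,v ∈ Δ satisfying D((1−ρ)q + ρv ‖ P₁) ≤ λ of D₂(ρ‖ε) + (1−ρ)·D(q‖P₀) is equal to the minimum over u ∈ Δ and p ∈ B_KL(P₁, λ) of D(p ‖ (1−ε)P₀ + εu). -/
open scoped BigOperators ENNReal Classical
open Filter

noncomputable section

/-- The set of probability distributions on a finite alphabet. -/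
def simplex (𝒳 : Type*) [Fintype 𝒳] : Set (𝒳 → ℝ) :=
  {p | (∀ x, 0 ≤ p x) ∧ ∑ x, p x = 1}

/-- Kullback–Leibler divergence, with values in `[0,∞]`. -/
def KL {𝒳 : Type*} [Fintype 𝒳] (p q : 𝒳 → ℝ) : ℝ≥0∞ :=
  if ∀ x, q x = 0 → p x = 0 then
    ENNReal.ofReal (∑ x, p x * Real.log (p x / q x))
  else ⊤

/-- KL ball of radius `r` around `p`. -/
def BKL {𝒳 : Type*} [Fintype 𝒳] (p : 𝒳 → ℝ) (r : ℝ) : Set (𝒳 → ℝ) :=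
  {q | q ∈ simplex 𝒳 ∧ KL q p ≤ ENNReal.ofReal r}

/-- Mixture `(1-a) p + a q`. -/
def mix {𝒳 : Type*} (a : ℝ) (p q : 𝒳 → ℝ) : 𝒳 → ℝ :=
  fun x => (1 - a) * p x + a * q x

/-- Binary KL divergence `D₂(ρ‖ε)`. -/
def D2 (ρ ε : ℝ) : ℝ≥0∞ :=
  KL (fun b : Bool => if b then ρ else 1 - ρ) (fun b : Bool => if b then ε else 1 - ε)

/-- Total variation distance. -/
def dTV {𝒳 : Type*} [Fintype 𝒳] (p q : 𝒳 → ℝ) : ℝ :=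
  (∑ x, |p x - q x|) / 2

/-- Empirical type of a string. -/
def typeOf {𝒳 : Type*} [Fintype 𝒳] [DecidableEq 𝒳] {n : ℕ} (x : Fin n → 𝒳) : 𝒳 → ℝ :=
  fun a => ((Finset.univ.filter fun i => x i = a).card : ℝ) / n

/-- i.i.d. probability of a string. -/
def iid {𝒳 : Type*} [Fintype 𝒳] (P : 𝒳 → ℝ) {n : ℕ} (x : Fin n → 𝒳) : ℝ :=
  ∏ i, P (x i)

/-- Probability of `z` under i.i.d. Bernoulli(ε). -/
def berW (ε : ℝ) {n : ℕ} (z : Fin n → Bool) : ℝ :=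
  ∏ i, if z i then ε else 1 - ε

/-- Hamming weight. -/
def wt {n : ℕ} (z : Fin n → Bool) : ℕ :=
  (Finset.univ.filter fun i => z i = true).card

/-- Probability of `z` under the uniform distribution on weight-⌈nε⌉ binary vectors. -/
def unifW (ε : ℝ) {n : ℕ} (z : Fin n → Bool) : ℝ :=
  if wt z = Nat.ceil ((n : ℝ) * ε) then
    (1 : ℝ) / ((Finset.univ.filter fun z' : Fin n → Bool => wt z' = Nat.ceil ((n : ℝ) * ε)).card : ℝ)
  else 0

/-- `liminf -(1/n) log E(n) ≥ l` (in the extended reals). -/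
def ExpLB (E : ℕ → ℝ) (l : ℝ) : Prop :=
  (l : EReal) ≤ Filter.liminf (fun n : ℕ => ((-(Real.log (E n)) / n : ℝ) : EReal)) Filter.atTop

open Real


lemma one_sub_inv_le_log {t : ℝ} (ht : 0 < t) : 1 - 1/t ≤ Real.log t := by
  have h := Real.log_le_sub_one_of_pos (show (0:ℝ) < 1/t by positivity)
  rw [Real.log_div one_ne_zero ht.ne', Real.log_one, one_div] at h
  rw [one_div]; linarith

lemma sub_le_mul_log {p q : ℝ} (hp : 0 ≤ p) (hq : 0 < q) :
    p - q ≤ p * Real.log (p / q) := by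
  rcases eq_or_lt_of_le hp with h | h
  · simp [← h]; linarith
  · have := one_sub_inv_le_log (show 0 < p/q by positivity)
    have h1 : 1/(p/q) = q/p := by field_simp
    rw [h1] at this
    have := mul_le_mul_of_nonneg_left this h.le
    calc p - q = p * (1 - q/p) := by field_simp
    _ ≤ p * Real.log (p/q) := this

lemma logSum2 {a b c d : ℝ} (ha : 0 ≤ a) (hb : 0 < b) (hc : 0 ≤ c) (hd : 0 ≤ d)
    (hcd : d = 0 → c = 0) :
    (a + c) * Real.log ((a + c) / (b + d)) ≤ a * Real.log (a / b) + c * Real.log (c / d) := by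
  have key : ∀ p q : ℝ, 0 < p → 0 < q → 0 < a + c →
      p - ((a+c)/(b+d)) * q ≤ p * Real.log (p / q) - p * Real.log ((a+c)/(b+d)) := by
    intro p q hp hq hacpos
    have hbd : (0:ℝ) < b + d := by linarith
    have hS : 0 < (a+c)/(b+d) := by positivity
    have h1 : 1 - 1/((p/q)/((a+c)/(b+d))) ≤ Real.log ((p/q)/((a+c)/(b+d))) :=
      one_sub_inv_le_log (by positivity)
    have h2 : Real.log ((p/q)/((a+c)/(b+d))) = Real.log (p/q) - Real.log ((a+c)/(b+d)) :=
      Real.log_div (by positivity) (by positivity)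
    have h3 : 1/((p/q)/((a+c)/(b+d))) = ((a+c)/(b+d)) * q / p := by
      field_simp
    rw [h2, h3] at h1
    have h5 := mul_le_mul_of_nonneg_left h1 hp.le
    have h4 : p * (1 - ((a+c)/(b+d)) * q / p) = p - ((a+c)/(b+d)) * q := by
      field_simp
    rw [h4, mul_sub] at h5
    linarith
  rcases eq_or_lt_of_le hc with hc0 | hcpos
  · rcases eq_or_lt_of_le ha with ha0 | hapos
    · simp [← hc0, ← ha0]
    · rw [← hc0]
      simp only [zero_mul, add_zero]
      have harg : a / (b + d) ≤ a / b := by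
        apply div_le_div_of_nonneg_left ha hb; linarith
      have := Real.log_le_log (by positivity) harg
      nlinarith
  · have hdpos : 0 < d := by
      rcases eq_or_lt_of_le hd with h0 | h; · exact absurd (hcd h0.symm) (by linarith)
      · exact h
    have hacpos : (0:ℝ) < a + c := by linarith
    have hbd : (0:ℝ) < b + d := by linarith
    have hS : ((a+c)/(b+d)) * b + ((a+c)/(b+d)) * d = a + c := by field_simp
    rcases eq_or_lt_of_le ha with ha0 | hapos
    · rw [← ha0]
      simp only [zero_mul, zero_add]
      have harg : c / (b + d) ≤ c / d := by
        apply div_le_div_of_nonneg_left hc hdpos; linarith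
      have := Real.log_le_log (by positivity) harg
      nlinarith
    · have h1 := key a b hapos hb hacpos
      have h2 := key c d hcpos hdpos hacpos
      nlinarith [h1, h2, hS]

lemma gibbs {𝒳 : Type*} [Fintype 𝒳] (p q : 𝒳 → ℝ) (hp0 : ∀ x, 0 ≤ p x)
    (hp1 : ∑ x, p x = 1) (hq0 : ∀ x, 0 ≤ q x) (hq1 : ∑ x, q x ≤ 1)
    (hac : ∀ x, q x = 0 → p x = 0) :
    0 ≤ ∑ x, p x * Real.log (p x / q x) := by
  have key : ∀ x, p x - q x ≤ p x * Real.log (p x / q x) := by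
    intro x
    rcases eq_or_lt_of_le (hp0 x) with h | h
    · rw [← h]; simpa using hq0 x
    · have hq : 0 < q x := (hq0 x).lt_of_ne fun e => by
        have := hac x e.symm; linarith
      exact sub_le_mul_log (hp0 x) hq
  have hsum := Finset.sum_le_sum (fun x (_ : x ∈ Finset.univ) => key x)
  rw [Finset.sum_sub_distrib, hp1] at hsum
  linarith

lemma KL_eq_ofReal {𝒳 : Type*} [Fintype 𝒳] (p q : 𝒳 → ℝ) (hq : ∀ x, 0 < q x) :
    KL p q = ENNReal.ofReal (∑ x, p x * Real.log (p x / q x)) :=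
  if_pos fun x hx => absurd hx (hq x).ne'

lemma D2_eq {ρ ε : ℝ} (hε : 0 < ε) (hε1 : ε < 1) :
    D2 ρ ε = ENNReal.ofReal
      (ρ * Real.log (ρ / ε) + (1 - ρ) * Real.log ((1 - ρ) / (1 - ε))) := by
  rw [D2, KL_eq_ofReal]
  · congr 1
    rw [Fintype.sum_bool]
    simp
  · intro b; cases b <;> simp <;> linarith

lemma realD2_nonneg {ρ ε : ℝ} (hρ0 : 0 ≤ ρ) (hρ1 : ρ ≤ 1) (hε : 0 < ε) (hε1 : ε < 1) :
    0 ≤ ρ * Real.log (ρ / ε) + (1 - ρ) * Real.log ((1 - ρ) / (1 - ε)) := by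
  have h1 : ρ - ε ≤ ρ * Real.log (ρ / ε) := sub_le_mul_log hρ0 hε
  have h2 : (1 - ρ) - (1 - ε) ≤ (1 - ρ) * Real.log ((1 - ρ) / (1 - ε)) :=
    sub_le_mul_log (by linarith) (by linarith)
  linarith

lemma mix_mem {𝒳 : Type*} [Fintype 𝒳] {a : ℝ} (ha0 : 0 ≤ a) (ha1 : a ≤ 1)
    {p q : 𝒳 → ℝ} (hp : p ∈ simplex 𝒳) (hq : q ∈ simplex 𝒳) :
    mix a p q ∈ simplex 𝒳 := by
  obtain ⟨hp0, hp1⟩ := hp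
  obtain ⟨hq0, hq1⟩ := hq
  constructor
  · intro x
    have := hp0 x; have := hq0 x
    have h1 : 0 ≤ (1 - a) * p x := mul_nonneg (by linarith) (hp0 x)
    have h2 : 0 ≤ a * q x := mul_nonneg ha0 (hq0 x)
    simpa [mix] using by linarith
  · simp only [mix, Finset.sum_add_distrib, ← Finset.mul_sum, hp1, hq1]
    ring

lemma scaled_log_pt {t s q P : ℝ} (ht : 0 ≤ t) (hs : 0 < s) (hq : 0 ≤ q) (hP : 0 < P) :
    (t * q) * Real.log ((t * q) / (s * P))
      = q * (t * Real.log (t / s)) + t * (q * Real.log (q / P)) := by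
  rcases eq_or_lt_of_le ht with h | h
  · simp [← h]
  rcases eq_or_lt_of_le hq with h' | h'
  · simp [← h']
  rw [mul_div_mul_comm, Real.log_mul (by positivity) (by positivity)]
  ring

lemma mix_pos {𝒳 : Type*} [Fintype 𝒳] {ε : ℝ} (hε : 0 ≤ ε) (hε1 : ε < 1)
    {P0 u : 𝒳 → ℝ} (hfs0 : ∀ x, 0 < P0 x) (hu0 : ∀ x, 0 ≤ u x) :
    ∀ x, 0 < mix ε P0 u x := by
  intro x
  have h1 : 0 < (1 - ε) * P0 x := mul_pos (by linarith) (hfs0 x)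
  have h2 : 0 ≤ ε * u x := mul_nonneg hε (hu0 x)
  show 0 < (1 - ε) * P0 x + ε * u x
  linarith

/-- Direction B real inequality. -/
lemma dirB_real {𝒳 : Type*} [Fintype 𝒳] (P0 : 𝒳 → ℝ) (hfs0 : ∀ x, 0 < P0 x)
    {ε ρ : ℝ} (hε : 0 < ε) (hε1 : ε < 1) (hρ0 : 0 ≤ ρ) (hρ1 : ρ ≤ 1)
    {q v : 𝒳 → ℝ} (hq : q ∈ simplex 𝒳) (hv : v ∈ simplex 𝒳) :
    ∑ x, mix ρ q v x * Real.log (mix ρ q v x / mix ε P0 v x)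
      ≤ (ρ * Real.log (ρ / ε) + (1 - ρ) * Real.log ((1 - ρ) / (1 - ε)))
        + (1 - ρ) * ∑ x, q x * Real.log (q x / P0 x) := by
  obtain ⟨hq0, hq1⟩ := hq
  obtain ⟨hv0, hv1⟩ := hv
  have step1 : ∀ x, mix ρ q v x * Real.log (mix ρ q v x / mix ε P0 v x)
      ≤ ((1-ρ) * q x) * Real.log (((1-ρ) * q x) / ((1-ε) * P0 x))
        + (ρ * v x) * Real.log ((ρ * v x) / (ε * v x)) := by
    intro x
    have := logSum2 (a := (1-ρ) * q x) (b := (1-ε) * P0 x) (c := ρ * v x) (d := ε * v x)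
      (mul_nonneg (by linarith) (hq0 x)) (mul_pos (by linarith) (hfs0 x))
      (mul_nonneg hρ0 (hv0 x)) (mul_nonneg hε.le (hv0 x))
      (fun h => by
        have hvx : v x = 0 := by
          rcases mul_eq_zero.1 h with h' | h'
          · exact absurd h' hε.ne'
          · exact h'
        rw [hvx, mul_zero])
    exact this
  have step2 : ∀ x, ((1-ρ) * q x) * Real.log (((1-ρ) * q x) / ((1-ε) * P0 x))
      = q x * ((1-ρ) * Real.log ((1-ρ) / (1-ε))) + (1-ρ) * (q x * Real.log (q x / P0 x)) :=
    fun x => scaled_log_pt (by linarith) (by linarith) (hq0 x) (hfs0 x)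
  have step3 : ∀ x, (ρ * v x) * Real.log ((ρ * v x) / (ε * v x))
      = v x * (ρ * Real.log (ρ / ε)) := by
    intro x
    rcases eq_or_lt_of_le (hv0 x) with h | h
    · rw [← h]; ring_nf
    · rw [mul_div_mul_right _ _ h.ne']
      ring
  calc ∑ x, mix ρ q v x * Real.log (mix ρ q v x / mix ε P0 v x)
      ≤ ∑ x, (((1-ρ) * q x) * Real.log (((1-ρ) * q x) / ((1-ε) * P0 x))
          + (ρ * v x) * Real.log ((ρ * v x) / (ε * v x))) :=
        Finset.sum_le_sum fun x _ => step1 x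
    _ = ∑ x, (q x * ((1-ρ) * Real.log ((1-ρ) / (1-ε)))
          + (1-ρ) * (q x * Real.log (q x / P0 x)) + v x * (ρ * Real.log (ρ / ε))) := by
        refine Finset.sum_congr rfl fun x _ => ?_
        rw [step2 x, step3 x]
    _ = (ρ * Real.log (ρ / ε) + (1 - ρ) * Real.log ((1 - ρ) / (1 - ε)))
        + (1 - ρ) * ∑ x, q x * Real.log (q x / P0 x) := by
        rw [Finset.sum_add_distrib, Finset.sum_add_distrib, ← Finset.sum_mul,
          ← Finset.sum_mul, ← Finset.mul_sum, hq1, hv1]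
        ring

/-- Direction A: decomposition existence. -/
lemma dirA {𝒳 : Type*} [Fintype 𝒳] (P0 u p : 𝒳 → ℝ) (hfs0 : ∀ x, 0 < P0 x)
    (hu : u ∈ simplex 𝒳) (hp : p ∈ simplex 𝒳) {ε : ℝ} (hε : 0 < ε) (hε1 : ε < 1) :
    ∃ ρ, 0 ≤ ρ ∧ ρ ≤ 1 ∧ ∃ q ∈ simplex 𝒳, ∃ v ∈ simplex 𝒳, mix ρ q v = p ∧
      (ρ * Real.log (ρ / ε) + (1 - ρ) * Real.log ((1 - ρ) / (1 - ε)))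
          + (1 - ρ) * ∑ x, q x * Real.log (q x / P0 x)
        ≤ ∑ x, p x * Real.log (p x / mix ε P0 u x) := by
  obtain ⟨hu0, hu1⟩ := hu
  obtain ⟨hp0, hp1⟩ := hp
  set m : 𝒳 → ℝ := mix ε P0 u with hm_def
  have hm : ∀ x, 0 < m x := mix_pos hε.le hε1 hfs0 hu0
  have hmx : ∀ x, m x = (1-ε) * P0 x + ε * u x := fun x => rfl
  set A : 𝒳 → ℝ := fun x => p x * ((1-ε) * P0 x) / m x with hA_def
  set B : 𝒳 → ℝ := fun x => p x * (ε * u x) / m x with hB_def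
  have hA0 : ∀ x, 0 ≤ A x := fun x =>
    div_nonneg (mul_nonneg (hp0 x) (mul_nonneg (by linarith) (hfs0 x).le)) (hm x).le
  have hB0 : ∀ x, 0 ≤ B x := fun x =>
    div_nonneg (mul_nonneg (hp0 x) (mul_nonneg hε.le (hu0 x))) (hm x).le
  have hAB : ∀ x, A x + B x = p x := by
    intro x
    show p x * ((1-ε) * P0 x) / m x + p x * (ε * u x) / m x = p x
    rw [← add_div, ← mul_add, ← hmx x, mul_div_assoc, div_self (hm x).ne', mul_one]
  set ρ := ∑ x, B x with hρ_def
  have hρ0 : 0 ≤ ρ := Finset.sum_nonneg fun x _ => hB0 x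
  have hsumA : ∑ x, A x = 1 - ρ := by
    have h1 : ∑ x, (A x + B x) = 1 := by
      rw [Finset.sum_congr rfl fun x _ => hAB x, hp1]
    rw [Finset.sum_add_distrib] at h1
    linarith
  have hρ1 : ρ ≤ 1 := by
    have := Finset.sum_nonneg fun x (_ : x ∈ Finset.univ) => hA0 x
    rw [hsumA] at this; linarith
  have hρlt : ρ < 1 := by
    rcases eq_or_lt_of_le hρ1 with h | h
    · exfalso
      have hA_zero : ∑ x, A x = 0 := by rw [hsumA, h]; ring
      have hAx : ∀ x ∈ Finset.univ, A x = 0 :=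
        (Finset.sum_eq_zero_iff_of_nonneg fun x _ => hA0 x).1 hA_zero
      have hpx : ∀ x, p x = 0 := by
        intro x
        have h0 := hAx x (Finset.mem_univ x)
        rw [hA_def] at h0
        have h1 : p x * ((1-ε) * P0 x) = 0 := by
          field_simp [(hm x).ne'] at h0
          linear_combination h0
        rcases mul_eq_zero.1 h1 with h2 | h2
        · exact h2
        · exact absurd h2 (mul_pos (by linarith) (hfs0 x)).ne'
      have : (1:ℝ) = 0 := by rw [← hp1, Finset.sum_congr rfl fun x _ => hpx x]; simp
      norm_num at this
    · exact h
  have h1ρ : (0:ℝ) < 1 - ρ := by linarith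
  set q : 𝒳 → ℝ := fun x => A x / (1 - ρ) with hq_def
  have hqA : ∀ x, (1 - ρ) * q x = A x := fun x => mul_div_cancel₀ _ h1ρ.ne'
  have hqs : q ∈ simplex 𝒳 := by
    constructor
    · intro x; exact div_nonneg (hA0 x) h1ρ.le
    · rw [show ∑ x, q x = (∑ x, A x) / (1 - ρ) from (Finset.sum_div _ _ _).symm, hsumA,
        div_self h1ρ.ne']
  -- the A-part sum identity
  have hAlog : ∀ x, A x * Real.log (A x / ((1-ε) * P0 x)) = A x * Real.log (p x / m x) := by
    intro x
    rcases eq_or_lt_of_le (hp0 x) with hpx | hpx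
    · have hz : A x = 0 := by show p x * ((1-ε) * P0 x) / m x = 0; rw [← hpx]; simp
      rw [hz]; ring
    · have h1 : ((1-ε) * P0 x) ≠ 0 := (mul_pos (show (0:ℝ) < 1-ε by linarith) (hfs0 x)).ne'
      have h2 : m x ≠ 0 := (hm x).ne'
      have harg : A x / ((1-ε) * P0 x) = p x / m x := by
        show p x * ((1-ε) * P0 x) / m x / ((1-ε) * P0 x) = p x / m x
        rw [div_div, mul_comm (m x), ← div_div, mul_div_cancel_right₀ _ h1]
      rw [harg]
  have hAsum : ∑ x, A x * Real.log (A x / ((1-ε) * P0 x))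
      = (1-ρ) * Real.log ((1-ρ) / (1-ε)) + (1-ρ) * ∑ x, q x * Real.log (q x / P0 x) := by
    have hpt : ∀ x, A x * Real.log (A x / ((1-ε) * P0 x))
        = q x * ((1-ρ) * Real.log ((1-ρ) / (1-ε))) + (1-ρ) * (q x * Real.log (q x / P0 x)) := by
      intro x
      rw [← hqA x]
      exact scaled_log_pt h1ρ.le (by linarith) (hqs.1 x) (hfs0 x)
    rw [Finset.sum_congr rfl fun x _ => hpt x, Finset.sum_add_distrib, ← Finset.sum_mul,
      hqs.2, one_mul, ← Finset.mul_sum]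
  -- the B-part sum bound
  have hBlog : ∀ x, B x * Real.log (B x / (ε * u x)) = B x * Real.log (p x / m x) := by
    intro x
    rcases eq_or_lt_of_le (hu0 x) with hux | hux
    · have hz : B x = 0 := by show p x * (ε * u x) / m x = 0; rw [← hux]; simp
      rw [hz]; ring
    · rcases eq_or_lt_of_le (hp0 x) with hpx | hpx
      · have hz : B x = 0 := by show p x * (ε * u x) / m x = 0; rw [← hpx]; simp
        rw [hz]; ring
      · have h1 : (ε * u x) ≠ 0 := (mul_pos hε hux).ne'
        have h2 : m x ≠ 0 := (hm x).ne'
        have harg : B x / (ε * u x) = p x / m x := by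
          show p x * (ε * u x) / m x / (ε * u x) = p x / m x
          field_simp
        rw [harg]
  have hsplit : ∑ x, p x * Real.log (p x / m x)
      = ∑ x, A x * Real.log (A x / ((1-ε) * P0 x)) + ∑ x, B x * Real.log (B x / (ε * u x)) := by
    rw [← Finset.sum_add_distrib]
    refine Finset.sum_congr rfl fun x _ => ?_
    rw [hAlog x, hBlog x, ← add_mul, hAB x]
  by_cases hρz : ρ = 0
  · -- B ≡ 0, take v := q
    have hsum0 : ∑ x, B x = 0 := by rw [← hρ_def]; exact hρz
    have hBx : ∀ x, B x = 0 := fun x =>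
      (Finset.sum_eq_zero_iff_of_nonneg fun y _ => hB0 y).1 hsum0 x (Finset.mem_univ x)
    refine ⟨ρ, hρ0, hρ1, q, hqs, q, hqs, ?_, ?_⟩
    · funext x
      show (1 - ρ) * q x + ρ * q x = p x
      rw [hqA x, hρz, zero_mul, add_zero, ← hAB x, hBx x, add_zero]
    · have hBsum0 : ∑ x, B x * Real.log (B x / (ε * u x)) = 0 :=
        Finset.sum_eq_zero fun x _ => by rw [hBx x]; ring
      rw [hsplit, hAsum, hBsum0, hρz]
      simp
  · have hρpos : 0 < ρ := (eq_or_lt_of_le hρ0).resolve_left (fun h => hρz h.symm)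
    set v : 𝒳 → ℝ := fun x => B x / ρ with hv_def
    have hvB : ∀ x, ρ * v x = B x := fun x => mul_div_cancel₀ _ hρpos.ne'
    have hvs : v ∈ simplex 𝒳 := by
      constructor
      · intro x; exact div_nonneg (hB0 x) hρpos.le
      · rw [show ∑ x, v x = (∑ x, B x) / ρ from (Finset.sum_div _ _ _).symm, div_self hρpos.ne']
    have hvu : ∀ x, u x = 0 → v x = 0 := by
      intro x hux
      have hz : B x = 0 := by show p x * (ε * u x) / m x = 0; rw [hux]; simp
      show B x / ρ = 0
      rw [hz, zero_div]
    have hBsum : ρ * Real.log (ρ / ε) ≤ ∑ x, B x * Real.log (B x / (ε * u x)) := by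
      have hpt : ∀ x, B x * Real.log (B x / (ε * u x))
          = v x * (ρ * Real.log (ρ / ε)) + ρ * (v x * Real.log (v x / u x)) := by
        intro x
        rcases eq_or_lt_of_le (hu0 x) with hux | hux
        · have hv0x : v x = 0 := hvu x hux.symm
          have hB0x : B x = 0 := by rw [← hvB x, hv0x, mul_zero]
          rw [hB0x, hv0x]; ring
        · rw [← hvB x]
          exact scaled_log_pt hρpos.le hε (hvs.1 x) hux
      rw [Finset.sum_congr rfl fun x _ => hpt x, Finset.sum_add_distrib, ← Finset.sum_mul,
        hvs.2, one_mul, ← Finset.mul_sum]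
      have hg : 0 ≤ ∑ x, v x * Real.log (v x / u x) :=
        gibbs v u hvs.1 hvs.2 hu0 (le_of_eq hu1) hvu
      nlinarith
    refine ⟨ρ, hρ0, hρ1, q, hqs, v, hvs, ?_, ?_⟩
    · funext x
      show (1 - ρ) * q x + ρ * v x = p x
      rw [hqA x, hvB x, hAB x]
    · rw [hsplit, hAsum]
      linarith

/-- **Remark 1 equality**: for `λ ∈ (0, D(P0‖P1))` and `ε ∈ (0,1)`, the two minima in
Claim 2 coincide. -/
theorem remark1_equality {𝒳 : Type*} [Fintype 𝒳] [Nonempty 𝒳]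
    (P0 P1 : 𝒳 → ℝ) (hP0 : P0 ∈ simplex 𝒳) (hP1 : P1 ∈ simplex 𝒳)
    (hfs0 : ∀ x, 0 < P0 x) (hfs1 : ∀ x, 0 < P1 x) (hne : P0 ≠ P1)
    {ε lam : ℝ} (hε : 0 < ε) (hε1 : ε < 1)
    (hlam : 0 < lam) (hlam' : ENNReal.ofReal lam < KL P0 P1) :
    (⨅ ρ ∈ Set.Icc (0:ℝ) 1, ⨅ q ∈ simplex 𝒳, ⨅ v ∈ simplex 𝒳,
        ⨅ (_ : KL (mix ρ q v) P1 ≤ ENNReal.ofReal lam),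
          D2 ρ ε + ENNReal.ofReal (1 - ρ) * KL q P0) =
      ⨅ u ∈ simplex 𝒳, ⨅ p ∈ BKL P1 lam, KL p (mix ε P0 u) := by
  have hgP0 : ∀ q : 𝒳 → ℝ, q ∈ simplex 𝒳 → 0 ≤ ∑ x, q x * Real.log (q x / P0 x) :=
    fun q hq => gibbs q P0 hq.1 hq.2 (fun x => (hfs0 x).le) (le_of_eq hP0.2)
      (fun x h => absurd h (hfs0 x).ne')
  apply le_antisymm
  · refine le_iInf fun u => le_iInf fun hu => le_iInf fun p => le_iInf fun hp => ?_
    obtain ⟨hps, hpKL⟩ := hp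
    obtain ⟨ρ, hρ0, hρ1, q, hqs, v, hvs, hmixeq, hineq⟩ := dirA P0 u p hfs0 hu hps hε hε1
    have hm : ∀ x, 0 < mix ε P0 u x := mix_pos hε.le hε1 hfs0 hu.1
    refine iInf_le_of_le ρ (iInf_le_of_le ⟨hρ0, hρ1⟩ (iInf_le_of_le q (iInf_le_of_le hqs
      (iInf_le_of_le v (iInf_le_of_le hvs (iInf_le_of_le (by rw [hmixeq]; exact hpKL) ?_))))))
    rw [D2_eq hε hε1, KL_eq_ofReal q P0 hfs0, KL_eq_ofReal p _ hm,
      ← ENNReal.ofReal_mul (show (0:ℝ) ≤ 1 - ρ by linarith),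
      ← ENNReal.ofReal_add (realD2_nonneg hρ0 hρ1 hε hε1)
        (mul_nonneg (by linarith) (hgP0 q hqs))]
    exact ENNReal.ofReal_le_ofReal hineq
  · refine le_iInf fun ρ => le_iInf fun hρ => le_iInf fun q => le_iInf fun hq =>
      le_iInf fun v => le_iInf fun hv => le_iInf fun hcond => ?_
    obtain ⟨hρ0, hρ1⟩ := hρ
    have hmm := mix_mem hρ0 hρ1 hq hv
    have hm : ∀ x, 0 < mix ε P0 v x := mix_pos hε.le hε1 hfs0 hv.1
    refine iInf_le_of_le v (iInf_le_of_le hv (iInf_le_of_le (mix ρ q v)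
      (iInf_le_of_le ⟨hmm, hcond⟩ ?_)))
    rw [KL_eq_ofReal _ _ hm, D2_eq hε hε1, KL_eq_ofReal q P0 hfs0]
    calc ENNReal.ofReal (∑ x, mix ρ q v x * Real.log (mix ρ q v x / mix ε P0 v x))
        ≤ ENNReal.ofReal ((ρ * Real.log (ρ / ε) + (1 - ρ) * Real.log ((1 - ρ) / (1 - ε)))
            + (1 - ρ) * ∑ x, q x * Real.log (q x / P0 x)) :=
          ENNReal.ofReal_le_ofReal (dirB_real P0 hfs0 hε hε1 hρ0 hρ1 hq hv)
      _ ≤ ENNReal.ofReal (ρ * Real.log (ρ / ε) + (1 - ρ) * Real.log ((1 - ρ) / (1 - ε)))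
            + ENNReal.ofReal ((1 - ρ) * ∑ x, q x * Real.log (q x / P0 x)) :=
          ENNReal.ofReal_add_le
      _ = ENNReal.ofReal (ρ * Real.log (ρ / ε) + (1 - ρ) * Real.log ((1 - ρ) / (1 - ε)))
            + ENNReal.ofReal (1 - ρ) * ENNReal.ofReal (∑ x, q x * Real.log (q x / P0 x)) := by
          rw [ENNReal.ofReal_mul (show (0:ℝ) ≤ 1 - ρ by linarith)]

end
end

section
/- (Appendix C continuity claim, converse side.) Fix ε ∈ (0,1) and λ > 0. Define, for t > 0, M(t) = min over q₁, v ∈ Δ such that (1−ε)q₁ + εv ∈ B_KL(P₁, t) of D(q₁‖P₀). Then lim_{δ→0⁺} M(λ−2δ) = M(λ), where the limit is over δ ∈ (0, λ/2). -/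
open scoped BigOperators ENNReal Classical
open Filter

noncomputable section

/-- `M(t) = min_{q₁,v ∈ Δ : (1-ε)q₁+εv ∈ B_KL(P1,t)} D(q₁‖P0)`. -/
def Mfw {𝒳 : Type*} [Fintype 𝒳] (P0 P1 : 𝒳 → ℝ) (ε t : ℝ) : ℝ≥0∞ :=
  ⨅ q1 ∈ simplex 𝒳, ⨅ v ∈ simplex 𝒳,
    ⨅ (_ : mix ε q1 v ∈ BKL P1 t), KL q1 P0

lemma mul_log_div_eq (c : ℝ) (hc : 0 < c) :
    (fun t : ℝ => t * Real.log (t / c)) = fun t => t * Real.log t - t * Real.log c := by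
  funext t
  rcases eq_or_ne t 0 with h | h
  · simp [h]
  · rw [Real.log_div h hc.ne']; ring

lemma mix_mem_simplex {𝒳 : Type*} [Fintype 𝒳] {p q : 𝒳 → ℝ} (hp : p ∈ simplex 𝒳)
    (hq : q ∈ simplex 𝒳) {a : ℝ} (h0 : 0 ≤ a) (h1 : a ≤ 1) : mix a p q ∈ simplex 𝒳 := by
  constructor
  · intro x
    have h2 := hp.1 x; have h3 := hq.1 x
    have : (0:ℝ) ≤ (1 - a) * p x := mul_nonneg (by linarith) h2
    have : (0:ℝ) ≤ a * q x := mul_nonneg h0 h3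
    simp only [mix]; linarith
  · simp only [mix]
    rw [Finset.sum_add_distrib, ← Finset.mul_sum, ← Finset.mul_sum, hp.2, hq.2]
    ring

lemma Mfw_anti {𝒳 : Type*} [Fintype 𝒳] (P0 P1 : 𝒳 → ℝ) (ε : ℝ) {t t' : ℝ} (h : t ≤ t') :
    Mfw P0 P1 ε t' ≤ Mfw P0 P1 ε t := by
  unfold Mfw
  refine iInf_mono fun q1 => iInf_mono fun hq1 => iInf_mono fun v => iInf_mono fun hv => ?_
  exact le_iInf fun hc => iInf_le _ ⟨hc.1, hc.2.trans (ENNReal.ofReal_le_ofReal h)⟩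

lemma KL_mix_le {𝒳 : Type*} [Fintype 𝒳] {P1 m : 𝒳 → ℝ} (hfs1 : ∀ x, 0 < P1 x)
    (hm0 : ∀ x, 0 ≤ m x) {s S : ℝ} (hs0 : 0 ≤ s) (hs1 : s ≤ 1)
    (hS : ∑ x, m x * Real.log (m x / P1 x) ≤ S) :
    ∑ x, (mix s m P1) x * Real.log ((mix s m P1) x / P1 x) ≤ (1 - s) * S := by
  have key : ∑ x, (mix s m P1) x * Real.log ((mix s m P1) x / P1 x)
      ≤ (1 - s) * ∑ x, m x * Real.log (m x / P1 x) := by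
    rw [Finset.mul_sum]
    refine Finset.sum_le_sum fun x _ => ?_
    have hcpos := hfs1 x
    set c := P1 x with hc
    set u := m x / c with hu
    have hu0 : 0 ≤ u := div_nonneg (hm0 x) hcpos.le
    have hconv := Real.convexOn_mul_log.2 (Set.mem_Ici.2 hu0) (Set.mem_Ici.2 zero_le_one)
      (by linarith : (0:ℝ) ≤ 1 - s) hs0 (by ring)
    simp only [smul_eq_mul, mul_one, Real.log_one, mul_zero, add_zero] at hconv
    have hmx : m x = c * u := by rw [hu]; field_simp [hcpos.ne']
    have hmix : mix s m P1 x = c * ((1 - s) * u + s) := by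
      simp only [mix, ← hc]; rw [hmx]; ring
    have hdiv : mix s m P1 x / c = (1 - s) * u + s := by
      rw [hmix]; field_simp
    rw [hdiv, hmix, hmx]
    calc c * ((1 - s) * u + s) * Real.log ((1 - s) * u + s)
        ≤ c * ((1 - s) * (u * Real.log u)) := by
          rw [mul_assoc]
          exact mul_le_mul_of_nonneg_left hconv hcpos.le
      _ = (1 - s) * (c * u * Real.log u) := by ring
  refine key.trans ?_
  have h1 : ∑ x, m x * Real.log (m x / P1 x) ≤ S := hS
  nlinarith [h1]

/-- **Appendix C continuity claim (converse side)**: `M(λ-2δ) → M(λ)` as `δ → 0⁺`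
over `δ ∈ (0, λ/2)`. -/
theorem appendixC_continuity_converse {𝒳 : Type*} [Fintype 𝒳] [Nonempty 𝒳]
    (P0 P1 : 𝒳 → ℝ) (hP0 : P0 ∈ simplex 𝒳) (hP1 : P1 ∈ simplex 𝒳)
    (hfs0 : ∀ x, 0 < P0 x) (hfs1 : ∀ x, 0 < P1 x) (hne : P0 ≠ P1)
    {ε lam : ℝ} (hε : 0 < ε) (hε1 : ε < 1) (hlam : 0 < lam) :
    Filter.Tendsto (fun δ : ℝ => Mfw P0 P1 ε (lam - 2 * δ))
      (nhdsWithin 0 (Set.Ioo 0 (lam / 2))) (nhds (Mfw P0 P1 ε lam)) := by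
  refine tendsto_order.2 ⟨fun a ha => ?_, fun b hb => ?_⟩
  · filter_upwards [eventually_mem_nhdsWithin] with δ hδ
    have h1 : lam - 2 * δ ≤ lam := by have := hδ.1; linarith
    exact ha.trans_le (Mfw_anti P0 P1 ε h1)
  · -- hb : Mfw P0 P1 ε lam < b
    have hb' : ∃ q1, ∃ _ : q1 ∈ simplex 𝒳, ∃ v, ∃ _ : v ∈ simplex 𝒳,
        ∃ _ : mix ε q1 v ∈ BKL P1 lam, KL q1 P0 < b := by
      simpa only [Mfw, iInf_lt_iff] using hb
    obtain ⟨q1, hq1, v, hv, hcon, hKL⟩ := hb'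
    set F : ℝ → ℝ := fun s => ∑ x, ((1-s)*q1 x + s*P1 x) *
        Real.log (((1-s)*q1 x + s*P1 x) / P0 x) with hF
    have hFc : Continuous F := by
      apply continuous_finset_sum
      intro x _
      have h2 : Continuous fun t : ℝ => t * Real.log (t / P0 x) := by
        rw [mul_log_div_eq (P0 x) (hfs0 x)]
        exact Real.continuous_mul_log.sub (continuous_id.mul continuous_const)
      exact h2.comp (by continuity)
    have hKLq1 : KL q1 P0 = ENNReal.ofReal (F 0) := by
      rw [KL, if_pos (fun x hx => absurd hx (hfs0 x).ne')]
      simp [hF]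
    have htend : Filter.Tendsto (fun s => ENNReal.ofReal (F s))
        (nhdsWithin 0 (Set.Ioi 0)) (nhds (KL q1 P0)) := by
      rw [hKLq1]
      exact (ENNReal.continuous_ofReal.tendsto _).comp
        ((hFc.tendsto 0).mono_left nhdsWithin_le_nhds)
    have hev : ∀ᶠ s in nhdsWithin (0:ℝ) (Set.Ioi 0),
        ENNReal.ofReal (F s) < b := htend.eventually_lt_const hKL
    have hev1 : ∀ᶠ s in nhdsWithin (0:ℝ) (Set.Ioi 0), s < 1 :=
      (gt_mem_nhds one_pos).filter_mono nhdsWithin_le_nhds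
    obtain ⟨s, hsF, hs1, hs0⟩ :=
      (hev.and (hev1.and eventually_mem_nhdsWithin)).exists
    rw [Set.mem_Ioi] at hs0
    -- the perturbed pair
    set q1s := mix s q1 P1 with hq1sdef
    set vs := mix s v P1 with hvsdef
    have hq1s : q1s ∈ simplex 𝒳 := mix_mem_simplex hq1 hP1 hs0.le hs1.le
    have hvs : vs ∈ simplex 𝒳 := mix_mem_simplex hv hP1 hs0.le hs1.le
    set m := mix ε q1 v with hmdef
    have hmixeq : mix ε q1s vs = mix s m P1 := by
      funext x; simp only [mix, hq1sdef, hvsdef, hmdef]; ring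
    have hm0 : ∀ x, 0 ≤ m x := hcon.1.1
    have hS : ∑ x, m x * Real.log (m x / P1 x) ≤ lam := by
      have h := hcon.2
      rw [KL, if_pos (fun x hx => absurd hx (hfs1 x).ne')] at h
      exact (ENNReal.ofReal_le_ofReal_iff hlam.le).1 h
    have hsum := KL_mix_le hfs1 hm0 hs0.le hs1.le hS
    have hKLq1s : KL q1s P0 = ENNReal.ofReal (F s) := by
      rw [KL, if_pos (fun x hx => absurd hx (hfs0 x).ne')]
      simp [hF, hq1sdef, mix]
    have hpos : (0:ℝ) < s * lam / 2 := by positivity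
    filter_upwards [eventually_mem_nhdsWithin,
      ((gt_mem_nhds hpos).filter_mono nhdsWithin_le_nhds :
        ∀ᶠ δ in nhdsWithin (0:ℝ) (Set.Ioo 0 (lam/2)), δ < s * lam / 2)] with δ hδ hδs
    have hfeas : mix ε q1s vs ∈ BKL P1 (lam - 2 * δ) := by
      rw [hmixeq]
      constructor
      · exact mix_mem_simplex hcon.1 hP1 hs0.le hs1.le
      · rw [KL, if_pos (fun x hx => absurd hx (hfs1 x).ne')]
        refine ENNReal.ofReal_le_ofReal (hsum.trans ?_)
        nlinarith
    have hle : Mfw P0 P1 ε (lam - 2 * δ) ≤ KL q1s P0 := by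
      refine le_trans (iInf_le _ q1s) (le_trans (iInf_le _ hq1s) ?_)
      exact le_trans (iInf_le _ vs) (le_trans (iInf_le _ hvs) (iInf_le _ hfeas))
    exact lt_of_le_of_lt (hle.trans_eq hKLq1s) hsF

end
end
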